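/- Let f ∈ F₁(a,b), let P be a probability measure on a measurable space (Ω,M), and let φ : Ω → ℝ be measurable with E_P[(f*(c₀φ − ν₀))⁺] < ∞ for some ν₀ ∈ ℝ and c₀ > 0. Then for every probability measure Q on (Ω,M) with D_f(Q,P) < ∞, one has E_Q[φ⁺] < ∞. -/

import Mathlib

open MeasureTheory Filter Set
open scoped ENNReal NNReal Classical

/-- The positive part of an extended real number, as an element of `ℝ≥0∞`. -/
noncomputable def erealPos (x : EReal) : ℝ≥0∞ := if x = ⊤ then ⊤ else ENNReal.ofReal x.toReal

/-- Extended expectation of an `EReal`-valued function, with the convention `∞ - ∞ = ∞`. -/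
noncomputable def feexp {Ω : Type*} [MeasurableSpace Ω] (P : Measure Ω) (g : Ω → EReal) : EReal :=
  if ∫⁻ x, erealPos (g x) ∂P = ⊤ then ⊤
  else ((∫⁻ x, erealPos (g x) ∂P).toReal : EReal) - ((∫⁻ x, erealPos (-(g x)) ∂P : ℝ≥0∞) : EReal)

/-- The extension of a convex function `f : (a,b) → ℝ` to a convex, lower semicontinuous
function `ℝ → (-∞,∞]`, taking the limiting values at finite endpoints and `∞` outside `[a,b]`. -/
noncomputable def fExt (a b : EReal) (f : ℝ → ℝ) (x : ℝ) : EReal :=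
  if a < (x : EReal) ∧ (x : EReal) < b then (f x : EReal)
  else if (x : EReal) = a then limsup (fun t : ℝ => (f t : EReal)) (nhdsWithin x (Ioi x))
  else if (x : EReal) = b then limsup (fun t : ℝ => (f t : EReal)) (nhdsWithin x (Iio x))
  else ⊤

/-- The `f`-divergence `D_f(Q,P) = E_P[f(dQ/dP)]` for `Q ≪ P`, and `∞` otherwise. -/
noncomputable def fDivg {Ω : Type*} [MeasurableSpace Ω] (a b : EReal) (f : ℝ → ℝ)
    (Q P : Measure Ω) : EReal :=
  if Q ≪ P then feexp P (fun x => fExt a b f ((Q.rnDeriv P) x).toReal) else ⊤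

/-- The Legendre transform `f*(y) = sup_{x ∈ (a,b)} {x y - f x}`. -/
noncomputable def legT (a b : EReal) (f : ℝ → ℝ) (y : ℝ) : EReal :=
  ⨆ x : {t : ℝ // a < (t : EReal) ∧ (t : EReal) < b}, ((x.1 * y - f x.1 : ℝ) : EReal)


section AuxLemmas

lemma erealPos_coe (r : ℝ) : erealPos (r : EReal) = ENNReal.ofReal r := by
  simp [erealPos]

lemma erealPos_top : erealPos ⊤ = ⊤ := by simp [erealPos]

lemma erealPos_mono : Monotone erealPos := by
  intro u v h
  by_cases hv : v = ⊤
  · simp [erealPos, hv]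
  have hu : u ≠ ⊤ := fun h' => hv (top_le_iff.1 (h' ▸ h))
  rw [erealPos, if_neg hu, erealPos, if_neg hv]
  by_cases hu' : u = ⊥
  · simp [hu']
  have hv' : v ≠ ⊥ := fun h' => hu' (le_bot_iff.1 (h' ▸ h))
  exact ENNReal.ofReal_le_ofReal (EReal.toReal_le_toReal h hu' hv)

lemma erealPos_add_le {u v : EReal} (hu : u ≠ ⊤) (hv : v ≠ ⊤) :
    erealPos (u + v) ≤ erealPos u + erealPos v := by
  by_cases hu' : u = ⊥
  · simp [erealPos, hu']
  by_cases hv' : v = ⊥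
  · simp [erealPos, hv']
  lift u to ℝ using ⟨hu, hu'⟩
  lift v to ℝ using ⟨hv, hv'⟩
  rw [← EReal.coe_add, erealPos_coe, erealPos_coe, erealPos_coe]
  exact ENNReal.ofReal_add_le

lemma measurable_erealPos : Measurable erealPos := by
  unfold erealPos
  exact Measurable.ite (measurableSet_singleton ⊤) measurable_const
    (ENNReal.measurable_ofReal.comp measurable_ereal_toReal)


lemma measurable_legT (a b : EReal) (f : ℝ → ℝ) : Measurable (legT a b f) := by
  have h : LowerSemicontinuous (legT a b f) := by
    apply lowerSemicontinuous_iSup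
    intro p
    exact (continuous_coe_real_ereal.comp (by continuity)).lowerSemicontinuous
  exact h.measurable

lemma young {a b : EReal} (ha1 : a < 1) (hb1 : (1 : EReal) < b) (f : ℝ → ℝ) (x y : ℝ)
    (hx : fExt a b f x ≠ ⊤) (hy : legT a b f y ≠ ⊤) :
    ((x * y : ℝ) : EReal) ≤ fExt a b f x + legT a b f y := by
  have h1mem : a < ((1 : ℝ) : EReal) ∧ ((1 : ℝ) : EReal) < b := by
    rw [EReal.coe_one]; exact ⟨ha1, hb1⟩
  have hbot : ((1 * y - f 1 : ℝ) : EReal) ≤ legT a b f y :=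
    le_iSup (fun p : {t : ℝ // a < (t : EReal) ∧ (t : EReal) < b} =>
      ((p.1 * y - f p.1 : ℝ) : EReal)) ⟨1, h1mem⟩
  have hy' : legT a b f y ≠ ⊥ := fun h => by rw [h, le_bot_iff] at hbot; exact EReal.coe_ne_bot _ hbot
  set c := (legT a b f y).toReal with hcdef
  have hcc : ((c : ℝ) : EReal) = legT a b f y := EReal.coe_toReal hy hy'
  have hle : ∀ t : ℝ, a < (t : EReal) → (t : EReal) < b → t * y - c ≤ f t := by
    intro t h1 h2
    have h3 : ((t * y - f t : ℝ) : EReal) ≤ legT a b f y :=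
      le_iSup (fun p : {t : ℝ // a < (t : EReal) ∧ (t : EReal) < b} =>
        ((p.1 * y - f p.1 : ℝ) : EReal)) ⟨t, h1, h2⟩
    rw [← hcc, EReal.coe_le_coe_iff] at h3
    linarith
  rw [fExt]
  split_ifs with h1 h2 h3
  · have := hle x h1.1 h1.2
    rw [← hcc, ← EReal.coe_add, EReal.coe_le_coe_iff]
    linarith
  · -- ↑x = a
    have hev : ∀ᶠ t in nhdsWithin x (Ioi x), ((t * y - c : ℝ) : EReal) ≤ (f t : EReal) := by
      have hU : {t : ℝ | (t : EReal) < b} ∈ nhds x := by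
        have ho : IsOpen {t : ℝ | (t : EReal) < b} := isOpen_Iio.preimage continuous_coe_real_ereal
        exact ho.mem_nhds (by rw [mem_setOf_eq, h2]; exact ha1.trans hb1)
      filter_upwards [self_mem_nhdsWithin, mem_nhdsWithin_of_mem_nhds hU] with t ht hb'
      have ha' : a < (t : EReal) := by rw [← h2]; exact_mod_cast ht
      exact EReal.coe_le_coe_iff.2 (hle t ha' hb')
    have hlim : Tendsto (fun t : ℝ => ((t * y - c : ℝ) : EReal)) (nhdsWithin x (Ioi x))
        (nhds ((x * y - c : ℝ) : EReal)) := by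
      apply Tendsto.mono_left _ nhdsWithin_le_nhds
      exact (continuous_coe_real_ereal.comp (by continuity)).tendsto x
    have hls : ((x * y - c : ℝ) : EReal) ≤ limsup (fun t : ℝ => (f t : EReal)) (nhdsWithin x (Ioi x)) := by
      have h4 := Filter.limsup_le_limsup hev
      rwa [hlim.limsup_eq] at h4
    calc ((x * y : ℝ) : EReal) = ((x * y - c : ℝ) : EReal) + ((c : ℝ) : EReal) := by
          rw [← EReal.coe_add]; norm_num
      _ ≤ limsup (fun t : ℝ => (f t : EReal)) (nhdsWithin x (Ioi x)) + legT a b f y := by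
          rw [hcc] at *
          exact add_le_add_left hls _
  · -- ↑x = b
    have hev : ∀ᶠ t in nhdsWithin x (Iio x), ((t * y - c : ℝ) : EReal) ≤ (f t : EReal) := by
      have hU : {t : ℝ | a < (t : EReal)} ∈ nhds x := by
        have ho : IsOpen {t : ℝ | a < (t : EReal)} := isOpen_Ioi.preimage continuous_coe_real_ereal
        exact ho.mem_nhds (by rw [mem_setOf_eq, h3]; exact ha1.trans hb1)
      filter_upwards [self_mem_nhdsWithin, mem_nhdsWithin_of_mem_nhds hU] with t ht ha'
      have hb' : (t : EReal) < b := by rw [← h3]; exact_mod_cast ht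
      exact EReal.coe_le_coe_iff.2 (hle t ha' hb')
    have hlim : Tendsto (fun t : ℝ => ((t * y - c : ℝ) : EReal)) (nhdsWithin x (Iio x))
        (nhds ((x * y - c : ℝ) : EReal)) := by
      apply Tendsto.mono_left _ nhdsWithin_le_nhds
      exact (continuous_coe_real_ereal.comp (by continuity)).tendsto x
    have hls : ((x * y - c : ℝ) : EReal) ≤ limsup (fun t : ℝ => (f t : EReal)) (nhdsWithin x (Iio x)) := by
      have h4 := Filter.limsup_le_limsup hev
      rwa [hlim.limsup_eq] at h4
    calc ((x * y : ℝ) : EReal) = ((x * y - c : ℝ) : EReal) + ((c : ℝ) : EReal) := by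
          rw [← EReal.coe_add]; norm_num
      _ ≤ limsup (fun t : ℝ => (f t : EReal)) (nhdsWithin x (Iio x)) + legT a b f y := by
          rw [hcc] at *
          exact add_le_add_left hls _
  · rw [EReal.top_add_of_ne_bot hy']
    exact le_top

lemma ofReal_max (y : ℝ) : ENNReal.ofReal (max y 0) = ENNReal.ofReal y := by
  rcases le_total y 0 with h | h
  · rw [max_eq_right h, ENNReal.ofReal_of_nonpos h, ENNReal.ofReal_zero]
  · rw [max_eq_left h]

lemma young_pos {a b : EReal} (ha1 : a < 1) (hb1 : (1 : EReal) < b) (f : ℝ → ℝ) (x y : ℝ)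
    (hx0 : 0 ≤ x) :
    ENNReal.ofReal (x * max y 0) ≤ erealPos (fExt a b f x) + erealPos (legT a b f y) := by
  by_cases hx : fExt a b f x = ⊤
  · rw [hx]; rw [show erealPos ⊤ = ⊤ by simp [erealPos], top_add]; exact le_top
  by_cases hy : legT a b f y = ⊤
  · rw [hy]; rw [show erealPos ⊤ = ⊤ by simp [erealPos], add_top]; exact le_top
  rcases le_total y 0 with h | h
  · simp [max_eq_right h]
  · rw [max_eq_left h]
    calc ENNReal.ofReal (x * y) = erealPos ((x * y : ℝ) : EReal) := (erealPos_coe _).symm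
      _ ≤ erealPos (fExt a b f x + legT a b f y) := erealPos_mono (young ha1 hb1 f x y hx hy)
      _ ≤ _ := erealPos_add_le hx hy


end AuxLemmas

/-- **Lemma.** If `f ∈ F₁(a,b)`, `P` is a probability measure, `φ` is measurable and
`E_P[(f*(c₀ φ - ν₀))⁺] < ∞` for some `ν₀ ∈ ℝ` and `c₀ > 0`, then `E_Q[φ⁺] < ∞` for every
probability measure `Q` with `D_f(Q,P) < ∞`. -/
theorem posPart_integrable_of_fDiv_lt_top {Ω : Type*} [MeasurableSpace Ω]
    {a b : EReal} (ha1 : a < 1) (hb1 : (1 : EReal) < b)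
    {f : ℝ → ℝ} (hf : ConvexOn ℝ {t : ℝ | a < (t : EReal) ∧ (t : EReal) < b} f)
    (hf1 : f 1 = 0)
    (P : Measure Ω) [IsProbabilityMeasure P]
    {φ : Ω → ℝ} (hφm : Measurable φ)
    {c₀ : ℝ} (hc₀ : 0 < c₀) (ν₀ : ℝ)
    (hint : ∫⁻ x, erealPos (legT a b f (c₀ * φ x - ν₀)) ∂P < ⊤) :
    ∀ Q : Measure Ω, IsProbabilityMeasure Q → fDivg a b f Q P < ⊤ →
      ∫⁻ x, ENNReal.ofReal (φ x) ∂Q < ⊤ := by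
  intro Q hQ hDiv
  rw [fDivg] at hDiv
  by_cases hac : Q ≪ P
  swap
  · rw [if_neg hac] at hDiv; exact absurd hDiv (lt_irrefl _)
  rw [if_pos hac, feexp] at hDiv
  have hI1 : ∫⁻ ω, erealPos (fExt a b f ((Q.rnDeriv P) ω).toReal) ∂P ≠ ⊤ := by
    intro h; rw [if_pos h] at hDiv; exact absurd hDiv (lt_irrefl _)
  have hg2m : Measurable (fun ω => erealPos (legT a b f (c₀ * φ ω - ν₀))) :=
    measurable_erealPos.comp ((measurable_legT a b f).comp
      ((hφm.const_mul c₀).sub measurable_const))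
  have key : ∫⁻ ω, ENNReal.ofReal (((Q.rnDeriv P) ω).toReal * max (c₀ * φ ω - ν₀) 0) ∂P < ⊤ := by
    calc ∫⁻ ω, ENNReal.ofReal (((Q.rnDeriv P) ω).toReal * max (c₀ * φ ω - ν₀) 0) ∂P
        ≤ ∫⁻ ω, erealPos (legT a b f (c₀ * φ ω - ν₀))
            + erealPos (fExt a b f ((Q.rnDeriv P) ω).toReal) ∂P := by
          apply lintegral_mono
          intro ω
          exact (young_pos ha1 hb1 f _ _ ENNReal.toReal_nonneg).trans_eq (add_comm _ _)
      _ = (∫⁻ ω, erealPos (legT a b f (c₀ * φ ω - ν₀)) ∂P)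
            + ∫⁻ ω, erealPos (fExt a b f ((Q.rnDeriv P) ω).toReal) ∂P :=
          lintegral_add_left hg2m _
      _ < ⊤ := ENNReal.add_lt_top.2 ⟨hint, lt_top_iff_ne_top.2 hI1⟩
  have hQlt : ∫⁻ ω, ENNReal.ofReal (c₀ * φ ω - ν₀) ∂Q < ⊤ := by
    have hQeq : ∫⁻ ω, ENNReal.ofReal (c₀ * φ ω - ν₀) ∂Q
        = ∫⁻ ω, ((Q.rnDeriv P) ω) * ENNReal.ofReal (c₀ * φ ω - ν₀) ∂P := by
      conv_lhs => rw [← Measure.withDensity_rnDeriv_eq Q P hac]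
      rw [lintegral_withDensity_eq_lintegral_mul_non_measurable _
        (Measure.measurable_rnDeriv Q P) (Measure.rnDeriv_lt_top Q P)]
      rfl
    rw [hQeq]
    have hcong : ∫⁻ ω, ((Q.rnDeriv P) ω) * ENNReal.ofReal (c₀ * φ ω - ν₀) ∂P
        = ∫⁻ ω, ENNReal.ofReal (((Q.rnDeriv P) ω).toReal * max (c₀ * φ ω - ν₀) 0) ∂P := by
      apply lintegral_congr_ae
      filter_upwards [Measure.rnDeriv_lt_top Q P] with ω hω
      rw [ENNReal.ofReal_mul ENNReal.toReal_nonneg, ENNReal.ofReal_toReal hω.ne,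
        ofReal_max]
    rw [hcong]
    exact key
  have hbound : ∀ ω, ENNReal.ofReal (φ ω)
      ≤ ENNReal.ofReal c₀⁻¹ * (ENNReal.ofReal (c₀ * φ ω - ν₀) + ENNReal.ofReal |ν₀|) := by
    intro ω
    have h1 : φ ω ≤ c₀⁻¹ * ((c₀ * φ ω - ν₀) + |ν₀|) := by
      have h2 : c₀ * φ ω ≤ (c₀ * φ ω - ν₀) + |ν₀| := by
        have := le_abs_self ν₀; linarith
      have h3 := mul_le_mul_of_nonneg_left h2 (le_of_lt (inv_pos.2 hc₀))
      rw [inv_mul_cancel_left₀ (ne_of_gt hc₀)] at h3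
      exact h3
    calc ENNReal.ofReal (φ ω) ≤ ENNReal.ofReal (c₀⁻¹ * ((c₀ * φ ω - ν₀) + |ν₀|)) :=
          ENNReal.ofReal_le_ofReal h1
      _ = ENNReal.ofReal c₀⁻¹ * ENNReal.ofReal ((c₀ * φ ω - ν₀) + |ν₀|) :=
          ENNReal.ofReal_mul (by positivity)
      _ ≤ _ := mul_le_mul_right ENNReal.ofReal_add_le _
  calc ∫⁻ ω, ENNReal.ofReal (φ ω) ∂Q
      ≤ ∫⁻ ω, ENNReal.ofReal c₀⁻¹ * (ENNReal.ofReal (c₀ * φ ω - ν₀) + ENNReal.ofReal |ν₀|) ∂Q :=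
        lintegral_mono hbound
    _ = ENNReal.ofReal c₀⁻¹ * ∫⁻ ω, ENNReal.ofReal (c₀ * φ ω - ν₀) + ENNReal.ofReal |ν₀| ∂Q :=
        lintegral_const_mul' _ _ ENNReal.ofReal_ne_top
    _ = ENNReal.ofReal c₀⁻¹ * ((∫⁻ ω, ENNReal.ofReal (c₀ * φ ω - ν₀) ∂Q)
          + ∫⁻ _, ENNReal.ofReal |ν₀| ∂Q) := by
        rw [lintegral_add_right _ measurable_const]
    _ < ⊤ := by
        apply ENNReal.mul_lt_top ENNReal.ofReal_lt_top
        apply ENNReal.add_lt_top.2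
        refine ⟨hQlt, ?_⟩
        rw [lintegral_const, measure_univ, mul_one]
        exact ENNReal.ofReal_lt_top
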